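/- If δ = 4(2πGR²/3 − L²c²) < 0, then x(t) = √(c²(t−t₀)² + |δ|/c²) satisfies the radiation-dominated open-universe (k = −1) constraint (1/2)ẋ² − (4πG/3)(R²/x⁴)x² + 2c²L²/x² − c²/2 = 0, and x(t) ≥ √|δ|/c > 0 for all t, so the universe is nonsingular. -/

import Mathlib

open Real

theorem radiation_dominated_solution_delta_negative_nonsingular
    (G c R L t₀ : ℝ) (hG : 0 < G) (hc : 0 < c) (hR : 0 < R) (hL : 0 < L)
    (δ : ℝ) (hδdef : δ = 4 * (2 * π * G * R ^ 2 / 3 - L ^ 2 * c ^ 2)) (hδ : δ < 0)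
    (x : ℝ → ℝ)
    (hx : ∀ t, x t = Real.sqrt (c ^ 2 * (t - t₀) ^ 2 + |δ| / c ^ 2)) :
    ∀ t, ((1/2) * (deriv x t) ^ 2 - (4 * π * G / 3) * (R ^ 2 / (x t) ^ 4) * (x t) ^ 2 +
        2 * c ^ 2 * L ^ 2 / (x t) ^ 2 - c ^ 2 / 2 = 0) ∧
      Real.sqrt |δ| / c ≤ x t ∧ 0 < x t := by
  intro t
  have hδpos : 0 < |δ| := abs_pos.mpr (ne_of_lt hδ)
  have hc2 : (0:ℝ) < c ^ 2 := by positivity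
  have hupos : ∀ s : ℝ, 0 < c ^ 2 * (s - t₀) ^ 2 + |δ| / c ^ 2 := fun s => by positivity
  have hxfun : x = fun s => Real.sqrt (c ^ 2 * (s - t₀) ^ 2 + |δ| / c ^ 2) :=
    funext fun s => hx s
  have hut := hupos t
  have hxt : x t = Real.sqrt (c ^ 2 * (t - t₀) ^ 2 + |δ| / c ^ 2) := hx t
  have hxpos : 0 < x t := by rw [hxt]; exact Real.sqrt_pos.mpr hut
  have hxsq : (x t) ^ 2 = c ^ 2 * (t - t₀) ^ 2 + |δ| / c ^ 2 := by
    rw [hxt, sq_sqrt hut.le]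
  -- derivative
  have hderivu : HasDerivAt (fun s : ℝ => c ^ 2 * (s - t₀) ^ 2 + |δ| / c ^ 2)
      (c ^ 2 * (2 * (t - t₀))) t := by
    have h1 : HasDerivAt (fun s : ℝ => (s - t₀) ^ 2) (2 * (t - t₀)) t := by
      simpa [Pi.pow_def] using ((hasDerivAt_id t).sub_const t₀).pow 2
    simpa using (h1.const_mul (c ^ 2)).add_const (|δ| / c ^ 2)
  have hderivx : HasDerivAt x
      (c ^ 2 * (2 * (t - t₀)) / (2 * Real.sqrt (c ^ 2 * (t - t₀) ^ 2 + |δ| / c ^ 2))) t := by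
    rw [hxfun]
    exact hderivu.sqrt (ne_of_gt hut)
  have hdx : deriv x t
      = c ^ 2 * (2 * (t - t₀)) / (2 * Real.sqrt (c ^ 2 * (t - t₀) ^ 2 + |δ| / c ^ 2)) :=
    hderivx.deriv
  have hsq : (Real.sqrt (c ^ 2 * (t - t₀) ^ 2 + |δ| / c ^ 2)) ^ 2
      = c ^ 2 * (t - t₀) ^ 2 + |δ| / c ^ 2 := sq_sqrt hut.le
  have habs : |δ| = -δ := abs_of_neg hδ
  refine ⟨?_, ?_, hxpos⟩
  · rw [hdx, hxt]
    set S := Real.sqrt (c ^ 2 * (t - t₀) ^ 2 + |δ| / c ^ 2) with hS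
    have hsne : S ≠ 0 := ne_of_gt (Real.sqrt_pos.mpr hut)
    have hcne : c ≠ 0 := ne_of_gt hc
    have hsq2 : S ^ 2 * c ^ 2 = c ^ 2 * (t - t₀) ^ 2 * c ^ 2 + |δ| := by
      rw [hsq]; field_simp
    rw [habs, hδdef] at hsq2
    field_simp
    linear_combination (-3) * hsq2
  · rw [hxt]
    have h1 : Real.sqrt |δ| / c = Real.sqrt (|δ| / c ^ 2) := by
      rw [Real.sqrt_div (abs_nonneg δ), Real.sqrt_sq hc.le]
    rw [h1]
    exact Real.sqrt_le_sqrt (by nlinarith [sq_nonneg (t - t₀)])
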